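/- Let D ⊆ ℂ be an open convex set, let f : ℂ → ℂ be complex differentiable on D, and let z₁,…,z_{d+1} ∈ D be pairwise distinct points. Then the (d-th order) divided difference of f at these nodes satisfies |f[z₁,…,z_{d+1}]| = |Σ_{i=1}^{d+1} f(z_i) / ∏_{j≠i} (z_i − z_j)| ≤ (sup_{ζ ∈ D} |f^{(d)}(ζ)|) / d!, where f^{(d)} denotes the d-th complex derivative of f. -/

import Mathlib

open Finset

private lemma itdw_eq' {D : Set ℂ} (hD : IsOpen D) (f : ℂ → ℂ) (n : ℕ) {x : ℂ} (hx : x ∈ D) :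
    iteratedDerivWithin n f D x = deriv^[n] f x := by
  rw [iteratedDerivWithin_eq_iteratedFDerivWithin, iteratedFDerivWithin_of_isOpen n hD hx,
    ← iteratedDeriv_eq_iteratedFDeriv, iteratedDeriv_eq_iterate]

private lemma analyticIter' {D : Set ℂ} (hD : IsOpen D) {f : ℂ → ℂ}
    (hf : DifferentiableOn ℂ f D) (m : ℕ) : AnalyticOnNhd ℂ (deriv^[m] f) D := by
  induction m with
  | zero => exact hf.analyticOnNhd hD
  | succ m ih => rw [Function.iterate_succ_apply']; exact ih.deriv

private lemma hasDerivAtIter' {D : Set ℂ} (hD : IsOpen D) {f : ℂ → ℂ}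
    (hf : DifferentiableOn ℂ f D) (m : ℕ) {x : ℂ} (hx : x ∈ D) :
    HasDerivAt (deriv^[m] f) (deriv^[m + 1] f x) x := by
  have h := ((analyticIter' hD hf m) x hx).differentiableAt.hasDerivAt
  rwa [Function.iterate_succ_apply']

private lemma sum_inv_prod_eq_zero' {n : ℕ} (z : Fin (n + 2) → ℂ) (hz : Function.Injective z) :
    ∑ i, (∏ j ∈ univ.erase i, (z i - z j))⁻¹ = 0 := by
  classical
  have hvs : Set.InjOn z (univ : Finset (Fin (n + 2))) := hz.injOn
  have hsum := Lagrange.sum_basis hvs univ_nonempty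
  have hco : ∀ i : Fin (n + 2),
      (Lagrange.basis univ z i).coeff (n + 1) = (∏ j ∈ univ.erase i, (z i - z j))⁻¹ := by
    intro i
    have hnd : (Lagrange.basis univ z i).natDegree = n + 1 := by
      rw [Lagrange.natDegree_basis hvs (mem_univ i)]
      simp [card_univ]
    rw [← hnd, Polynomial.coeff_natDegree, Lagrange.basis, Polynomial.leadingCoeff_prod,
      ← Finset.prod_inv_distrib]
    refine Finset.prod_congr rfl fun j hj => ?_
    rw [Lagrange.basisDivisor, Polynomial.leadingCoeff_mul, Polynomial.leadingCoeff_C,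
      (Polynomial.monic_X_sub_C (z j)).leadingCoeff, mul_one]
  have hcoeff := congrArg (fun p : Polynomial ℂ => p.coeff (n + 1)) hsum
  simp only [Polynomial.finset_sum_coeff, hco, Polynomial.coeff_one] at hcoeff
  simpa using hcoeff

private lemma univ_erase_last' {n : ℕ} :
    (univ : Finset (Fin (n + 2))).erase (Fin.last (n + 1)) = univ.map Fin.castSuccEmb := by
  rw [← Fin.Iio_last_eq_map]
  ext j; rw [mem_erase, mem_Iio]; simp [Fin.lt_last_iff_ne_last]

private lemma erase_last_prod' {n : ℕ} (h : Fin (n + 2) → ℂ) :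
    ∏ j ∈ (univ : Finset (Fin (n + 2))).erase (Fin.last (n + 1)), h j
      = ∏ j : Fin (n + 1), h j.castSucc := by
  rw [univ_erase_last', Finset.prod_map]; rfl

private lemma erase_castSucc_prod' {n : ℕ} (i : Fin (n + 1)) (h : Fin (n + 2) → ℂ) :
    ∏ j ∈ (univ : Finset (Fin (n + 2))).erase i.castSucc, h j
      = h (Fin.last (n + 1)) * ∏ j ∈ univ.erase i, h j.castSucc := by
  classical
  have hmem : Fin.last (n + 1) ∈ (univ : Finset (Fin (n + 2))).erase i.castSucc :=
    mem_erase.mpr ⟨(Fin.castSucc_lt_last i).ne', mem_univ _⟩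
  rw [← Finset.mul_prod_erase _ h hmem]
  congr 1
  rw [Finset.erase_right_comm, univ_erase_last',
    show i.castSucc = Fin.castSuccEmb i from rfl, ← Finset.map_erase, Finset.prod_map]
  rfl

private lemma step_identity' {n : ℕ} (f : ℂ → ℂ) (z : Fin (n + 2) → ℂ)
    (hz : Function.Injective z) :
    ∑ i, f (z i) / ∏ j ∈ univ.erase i, (z i - z j) =
    ∑ i : Fin (n + 1),
      ((f (z i.castSucc) - f (z (Fin.last (n + 1)))) / (z i.castSucc - z (Fin.last (n + 1)))) /
        ∏ j ∈ univ.erase i, (z i.castSucc - z j.castSucc) := by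
  classical
  set w := z (Fin.last (n + 1)) with hw
  have h0 := sum_inv_prod_eq_zero' z hz
  rw [Fin.sum_univ_castSucc] at h0 ⊢
  simp only [erase_castSucc_prod', erase_last_prod'] at h0 ⊢
  have hPsum : ∑ i : Fin (n + 1),
      ((z i.castSucc - w) * ∏ j ∈ univ.erase i, (z i.castSucc - z j.castSucc))⁻¹
      = -(∏ j : Fin (n + 1), (w - z j.castSucc))⁻¹ :=
    eq_neg_of_add_eq_zero_left h0
  have hterm : ∀ i : Fin (n + 1),
      ((f (z i.castSucc) - f w) / (z i.castSucc - w)) /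
          ∏ j ∈ univ.erase i, (z i.castSucc - z j.castSucc)
      = f (z i.castSucc) / ((z i.castSucc - w) * ∏ j ∈ univ.erase i, (z i.castSucc - z j.castSucc))
        - f w * ((z i.castSucc - w) * ∏ j ∈ univ.erase i, (z i.castSucc - z j.castSucc))⁻¹ := by
    intro i
    rw [div_div, sub_div, div_eq_mul_inv (f w)]
  rw [Finset.sum_congr rfl fun i _ => hterm i, Finset.sum_sub_distrib, ← Finset.mul_sum, hPsum]
  ring

/-- The iterated "Genocchi–Hermite" auxiliary integrals. -/
private noncomputable def G' (f : ℂ → ℂ) (w : ℂ) (k : ℕ) (ζ : ℂ) : ℂ :=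
  ∫ t in (0:ℝ)..1, ((t : ℂ)) ^ k * deriv^[k + 1] f (w + (t : ℂ) * (ζ - w))

section
variable {D : Set ℂ} {f : ℂ → ℂ} {w : ℂ}

private lemma memD' (hconv : Convex ℝ D) (hw : w ∈ D) {ζ : ℂ} (hζ : ζ ∈ D) {t : ℝ}
    (ht : t ∈ Set.Icc (0:ℝ) 1) : w + (t : ℂ) * (ζ - w) ∈ D := by
  have h := hconv hw hζ (by linarith [ht.2] : (0:ℝ) ≤ 1 - t) ht.1 (by ring)
  convert h using 1
  simp only [Complex.real_smul]
  push_cast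
  ring

private lemma contPath' {ζ : ℂ} : Continuous fun t : ℝ => w + (t : ℂ) * (ζ - w) :=
  continuous_const.add (Complex.continuous_ofReal.mul continuous_const)

private lemma contOnIntegrand' (hD : IsOpen D) (hconv : Convex ℝ D)
    (hf : DifferentiableOn ℂ f D) (hw : w ∈ D) (k m : ℕ) {x : ℂ} (hx : x ∈ D) :
    ContinuousOn (fun t : ℝ => ((t : ℂ)) ^ k * deriv^[m] f (w + (t : ℂ) * (x - w)))
      (Set.Icc (0:ℝ) 1) := by
  refine ContinuousOn.mul ((Complex.continuous_ofReal.pow k).continuousOn) ?_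
  exact (analyticIter' hD hf m).continuousOn.comp contPath'.continuousOn
    (fun t ht => memD' hconv hw hx ht)

private lemma hGderiv' (hD : IsOpen D) (hconv : Convex ℝ D) (hf : DifferentiableOn ℂ f D)
    (hw : w ∈ D) (k : ℕ) {ζ : ℂ} (hζ : ζ ∈ D) :
    HasDerivAt (G' f w k) (G' f w (k + 1) ζ) ζ := by
  obtain ⟨ε, εpos, hball⟩ : ∃ ε > 0, Metric.closedBall ζ ε ⊆ D := by
    rcases Metric.isOpen_iff.mp hD ζ hζ with ⟨δ, δpos, hδ⟩
    exact ⟨δ / 2, by positivity, fun x hx => hδ (Metric.mem_ball.mpr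
      (lt_of_le_of_lt (Metric.mem_closedBall.mp hx) (by linarith)))⟩
  set K : Set ℂ := (fun p : ℝ × ℂ => w + (p.1 : ℂ) * (p.2 - w)) ''
    (Set.Icc (0:ℝ) 1 ×ˢ Metric.closedBall ζ ε) with hK
  have hK_comp : IsCompact K := by
    refine (isCompact_Icc.prod (isCompact_closedBall ζ ε)).image ?_
    exact continuous_const.add ((Complex.continuous_ofReal.comp continuous_fst).mul
      (continuous_snd.sub continuous_const))
  have hK_sub : K ⊆ D := by
    rintro _ ⟨⟨t, x⟩, ⟨ht, hx⟩, rfl⟩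
    exact memD' hconv hw (hball hx) ht
  obtain ⟨M, hM⟩ := hK_comp.exists_bound_of_continuousOn
    ((analyticIter' hD hf (k + 2)).continuousOn.mono hK_sub)
  have hIoc : Set.uIoc (0:ℝ) 1 = Set.Ioc (0:ℝ) 1 := Set.uIoc_of_le zero_le_one
  have hIcc : Set.uIcc (0:ℝ) 1 = Set.Icc (0:ℝ) 1 := Set.uIcc_of_le zero_le_one
  have hmemK : ∀ {t : ℝ}, t ∈ Set.Icc (0:ℝ) 1 → ∀ {x : ℂ}, x ∈ Metric.closedBall ζ ε →
      w + (t : ℂ) * (x - w) ∈ K := by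
    intro t ht x hx
    exact ⟨(t, x), ⟨ht, hx⟩, rfl⟩
  have key := intervalIntegral.hasDerivAt_integral_of_dominated_loc_of_deriv_le
    (μ := MeasureTheory.volume) (𝕜 := ℂ)
    (F := fun x t => ((t : ℂ)) ^ k * deriv^[k + 1] f (w + (t : ℂ) * (x - w)))
    (F' := fun x t => ((t : ℂ)) ^ (k + 1) * deriv^[k + 2] f (w + (t : ℂ) * (x - w)))
    (bound := fun _ => M) (a := 0) (b := 1) (x₀ := ζ) (Metric.ball_mem_nhds ζ εpos)
    ?_ ?_ ?_ ?_ ?_ ?_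
  · exact key.2
  · filter_upwards [hD.mem_nhds hζ] with x hx
    rw [hIoc]
    exact ((contOnIntegrand' hD hconv hf hw k (k + 1) hx).mono
      Set.Ioc_subset_Icc_self).aestronglyMeasurable measurableSet_Ioc
  · refine ContinuousOn.intervalIntegrable ?_
    rw [hIcc]
    exact contOnIntegrand' hD hconv hf hw k (k + 1) hζ
  · rw [hIoc]
    exact ((contOnIntegrand' hD hconv hf hw (k + 1) (k + 2) hζ).mono
      Set.Ioc_subset_Icc_self).aestronglyMeasurable measurableSet_Ioc
  · refine MeasureTheory.ae_of_all _ fun t ht x hx => ?_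
    rw [hIoc] at ht
    have htIcc : t ∈ Set.Icc (0:ℝ) 1 := Set.Ioc_subset_Icc_self ht
    have hxK : w + (t : ℂ) * (x - w) ∈ K := hmemK htIcc (Metric.ball_subset_closedBall hx)
    have hMx := hM _ hxK
    calc ‖((t : ℂ)) ^ (k + 1) * deriv^[k + 2] f (w + (t : ℂ) * (x - w))‖
        = |t| ^ (k + 1) * ‖deriv^[k + 2] f (w + (t : ℂ) * (x - w))‖ := by
          rw [norm_mul, norm_pow, Complex.norm_real, Real.norm_eq_abs]
      _ ≤ 1 * M := by
          apply mul_le_mul _ hMx (norm_nonneg _) zero_le_one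
          exact pow_le_one₀ (abs_nonneg t) (by rw [abs_of_pos ht.1]; exact ht.2)
      _ = M := one_mul M
  · exact intervalIntegrable_const
  · refine MeasureTheory.ae_of_all _ fun t ht x hx => ?_
    rw [hIoc] at ht
    have htIcc : t ∈ Set.Icc (0:ℝ) 1 := Set.Ioc_subset_Icc_self ht
    have hxD : x ∈ D := hball (Metric.ball_subset_closedBall hx)
    have hpD : w + (t : ℂ) * (x - w) ∈ D := memD' hconv hw hxD htIcc
    have hpath : HasDerivAt (fun y : ℂ => w + (t : ℂ) * (y - w)) (t : ℂ) x := by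
      simpa using (((hasDerivAt_id x).sub_const w).const_mul (t : ℂ)).const_add w
    have hg := hasDerivAtIter' hD hf (k + 1) hpD
    have hcomp := (hg.comp x hpath).const_mul ((t : ℂ) ^ k)
    exact hcomp.congr_deriv (by ring)

private lemma hG0' (hD : IsOpen D) (hconv : Convex ℝ D) (hf : DifferentiableOn ℂ f D)
    (hw : w ∈ D) {ζ : ℂ} (hζ : ζ ∈ D) (hne : ζ ≠ w) :
    G' f w 0 ζ = (f ζ - f w) / (ζ - w) := by
  have hkey : ∫ t in (0:ℝ)..1, deriv f (w + (t : ℂ) * (ζ - w)) * (ζ - w) = f ζ - f w := by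
    have hmain := intervalIntegral.integral_eq_sub_of_hasDerivAt
      (f := fun t : ℝ => f (w + (t : ℂ) * (ζ - w)))
      (f' := fun t : ℝ => deriv f (w + (t : ℂ) * (ζ - w)) * (ζ - w)) (a := 0) (b := 1)
      ?_ ?_
    · have h1 : w + ((1:ℝ) : ℂ) * (ζ - w) = ζ := by push_cast; ring
      have h0 : w + ((0:ℝ) : ℂ) * (ζ - w) = w := by push_cast; ring
      rwa [h1, h0] at hmain
    · intro t ht
      rw [Set.uIcc_of_le zero_le_one] at ht
      have hpD := memD' hconv hw hζ ht
      have hpathC : HasDerivAt (fun s : ℂ => w + s * (ζ - w)) (ζ - w) ((t : ℝ) : ℂ) := by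
        simpa using ((hasDerivAt_id ((t : ℝ) : ℂ)).mul_const (ζ - w)).const_add w
      have hfd : HasDerivAt (deriv^[0] f) (deriv^[0 + 1] f (w + (t : ℂ) * (ζ - w)))
          (w + (t : ℂ) * (ζ - w)) := hasDerivAtIter' hD hf 0 hpD
      have hcomp := hfd.comp ((t : ℝ) : ℂ) hpathC
      exact hcomp.comp_ofReal
    · refine ContinuousOn.intervalIntegrable ?_
      rw [Set.uIcc_of_le zero_le_one]
      exact ((analyticIter' hD hf 1).continuousOn.comp contPath'.continuousOn
        (fun t ht => memD' hconv hw hζ ht)).mul continuousOn_const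
  have hmul : G' f w 0 ζ * (ζ - w) = f ζ - f w := by
    rw [G', ← intervalIntegral.integral_mul_const]
    rw [← hkey]
    congr 1
    funext t
    simp
  rw [eq_div_iff (sub_ne_zero.mpr hne)]
  exact hmul

private lemma hGbound' (hconv : Convex ℝ D) (hw : w ∈ D)
    (d : ℕ) (C : ℝ) (hC : ∀ x ∈ D, ‖deriv^[d + 1] f x‖ ≤ C) {ζ : ℂ} (hζ : ζ ∈ D) :
    ‖G' f w d ζ‖ ≤ C / ((d : ℝ) + 1) := by
  have hC0 : 0 ≤ C := le_trans (norm_nonneg _) (hC w hw)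
  have h1 : ‖G' f w d ζ‖ ≤ |∫ t in (0:ℝ)..1, C * t ^ d| := by
    apply intervalIntegral.norm_integral_le_abs_of_norm_le
    · refine (MeasureTheory.ae_restrict_iff' measurableSet_uIoc).mpr
        (MeasureTheory.ae_of_all _ fun t ht => ?_)
      rw [Set.uIoc_of_le zero_le_one] at ht
      have htIcc : t ∈ Set.Icc (0:ℝ) 1 := Set.Ioc_subset_Icc_self ht
      have hpD := memD' hconv hw hζ htIcc
      calc ‖(t : ℂ) ^ d * deriv^[d + 1] f (w + (t : ℂ) * (ζ - w))‖
          = |t| ^ d * ‖deriv^[d + 1] f (w + (t : ℂ) * (ζ - w))‖ := by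
            rw [norm_mul, norm_pow, Complex.norm_real, Real.norm_eq_abs]
        _ ≤ t ^ d * C := by
            rw [abs_of_nonneg htIcc.1]
            exact mul_le_mul_of_nonneg_left (hC _ hpD) (pow_nonneg htIcc.1 d)
        _ = C * t ^ d := mul_comm _ _
    · exact (continuous_const.mul (continuous_pow d)).intervalIntegrable 0 1
  have h2 : ∫ t in (0:ℝ)..1, C * t ^ d = C / ((d : ℝ) + 1) := by
    rw [intervalIntegral.integral_const_mul, integral_pow]
    simp
    ring
  rw [h2] at h1
  rwa [abs_of_nonneg (div_nonneg hC0 (by positivity))] at h1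

private lemma hGiter' (hD : IsOpen D) (hconv : Convex ℝ D) (hf : DifferentiableOn ℂ f D)
    (hw : w ∈ D) (k : ℕ) {ζ : ℂ} (hζ : ζ ∈ D) :
    iteratedDerivWithin k (G' f w 0) D ζ = G' f w k ζ := by
  induction k generalizing ζ with
  | zero => rw [iteratedDerivWithin_zero]
  | succ k ih =>
    rw [iteratedDerivWithin_succ, derivWithin_of_isOpen hD hζ]
    have heq : deriv (iteratedDerivWithin k (G' f w 0) D) ζ = deriv (G' f w k) ζ := by
      apply Filter.EventuallyEq.deriv_eq
      filter_upwards [hD.mem_nhds hζ] with x hx using ih hx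
    rw [heq, (hGderiv' hD hconv hf hw k hζ).deriv]

end

private theorem divided_difference_aux (D : Set ℂ) (hD : IsOpen D) (hconv : Convex ℝ D) (d : ℕ) :
    ∀ (f : ℂ → ℂ), DifferentiableOn ℂ f D →
      ∀ z : Fin (d + 1) → ℂ, Function.Injective z → (∀ i, z i ∈ D) →
      ∀ C : ℝ, (∀ ζ ∈ D, ‖iteratedDerivWithin d f D ζ‖ ≤ C) →
      ‖∑ i, f (z i) / ∏ j ∈ univ.erase i, (z i - z j)‖ ≤
        C / (Nat.factorial d : ℝ) := by
  induction d with
  | zero =>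
    intro f hf z hz hzD C hC
    have h := hC (z 0) (hzD 0)
    rw [iteratedDerivWithin_zero] at h
    simpa [show ((univ : Finset (Fin 1)).erase 0) = ∅ from rfl] using h
  | succ d ih =>
    intro f hf z hz hzD C hC
    set w := z (Fin.last (d + 1)) with hwdef
    have hw : w ∈ D := hzD _
    have hC' : ∀ x ∈ D, ‖deriv^[d + 1] f x‖ ≤ C := by
      intro x hx
      have := hC x hx
      rwa [itdw_eq' hD f (d + 1) hx] at this
    set F := G' f w 0 with hF
    have hFdiff : DifferentiableOn ℂ F D := fun x hx =>
      (hGderiv' hD hconv hf hw 0 hx).differentiableAt.differentiableWithinAt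
    have hFbound : ∀ ζ ∈ D, ‖iteratedDerivWithin d F D ζ‖ ≤ C / ((d : ℝ) + 1) := by
      intro ζ hζ
      rw [hF, hGiter' hD hconv hf hw d hζ]
      exact hGbound' hconv hw d C hC' hζ
    have hy_inj : Function.Injective fun i : Fin (d + 1) => z i.castSucc :=
      fun i j h => Fin.castSucc_injective _ (hz h)
    have hyD : ∀ i : Fin (d + 1), z i.castSucc ∈ D := fun i => hzD _
    have hIH := ih F hFdiff (fun i => z i.castSucc) hy_inj hyD (C / ((d : ℝ) + 1)) hFbound
    rw [step_identity' f z hz]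
    have hsum_eq : ∑ i : Fin (d + 1),
        ((f (z i.castSucc) - f w) / (z i.castSucc - w)) /
          ∏ j ∈ univ.erase i, (z i.castSucc - z j.castSucc)
        = ∑ i : Fin (d + 1), F (z i.castSucc) /
            ∏ j ∈ univ.erase i, (z i.castSucc - z j.castSucc) := by
      refine Finset.sum_congr rfl fun i _ => ?_
      have hne : z i.castSucc ≠ w := by
        intro h
        exact (Fin.castSucc_lt_last i).ne (hz h)
      rw [hF, hG0' hD hconv hf hw (hzD _) hne]
    rw [← hwdef, hsum_eq]
    refine le_trans hIH (le_of_eq ?_)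
    have hfac : ((d + 1).factorial : ℝ) = ((d : ℝ) + 1) * (d.factorial : ℝ) := by
      rw [Nat.factorial_succ]; push_cast; ring
    rw [hfac, ← div_div]

/-- **Proposition 5.6 (Genocchi–Hermite bound).**  For `f` complex differentiable on
an open convex set `D` containing the pairwise distinct nodes `z₁, …, z_{d+1}`,
the `d`-th order divided difference satisfies
`|f[z₁,…,z_{d+1}]| ≤ sup_{ζ ∈ D} |f⁽ᵈ⁾(ζ)| / d!` (stated with any upper bound `C`
for `|f⁽ᵈ⁾|` on `D`, which also covers the case of an infinite supremum). -/
theorem divided_difference_derivative_bound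
    {d : ℕ} (D : Set ℂ) (hD : IsOpen D) (hconv : Convex ℝ D)
    (f : ℂ → ℂ) (hf : DifferentiableOn ℂ f D)
    (z : Fin (d + 1) → ℂ) (hz : Function.Injective z) (hzD : ∀ i, z i ∈ D)
    (C : ℝ) (hC : ∀ ζ ∈ D, ‖iteratedDerivWithin d f D ζ‖ ≤ C) :
    ‖∑ i, f (z i) / ∏ j ∈ univ.erase i, (z i - z j)‖ ≤
      C / (Nat.factorial d : ℝ) := by
  exact divided_difference_aux D hD hconv d f hf z hz hzD C hC
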